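/- Let Q be a real symmetric positive definite d×d matrix. Then the hyperplane {S symmetric : trace(Q⁻¹S) = d} supports the set {Q′ positive definite symmetric : det Q′ ≥ det Q} at Q: one has trace(Q⁻¹Q) = d, and every real symmetric positive definite d×d matrix Q′ with det Q′ ≥ det Q satisfies trace(Q⁻¹Q′) ≥ d. -/

import Mathlib

open Matrix

private lemma trace_eq_sum_eigenvalues {d : ℕ} {A : Matrix (Fin d) (Fin d) ℝ}
    (hA : A.IsHermitian) : A.trace = ∑ i, hA.eigenvalues i := by
  conv_lhs => rw [hA.spectral_theorem]
  rw [Unitary.conjStarAlgAut_apply, Matrix.trace_mul_cycle,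
    (Matrix.mem_unitaryGroup_iff').mp hA.eigenvectorUnitary.2, Matrix.one_mul,
    Matrix.trace_diagonal]
  rfl

/-- The hyperplane `{S : trace(Q⁻¹ S) = d}` supports the set of symmetric positive definite
matrices with determinant at least `det Q` at `Q`: one has `trace(Q⁻¹ Q) = d`, and every
symmetric positive definite `Q'` with `det Q' ≥ det Q` satisfies `trace(Q⁻¹ Q') ≥ d`. -/
theorem trace_inv_mul_supports_det_level_set {d : ℕ}
    (Q : Matrix (Fin d) (Fin d) ℝ) (hQsymm : Q.IsSymm) (hQpd : Q.PosDef) :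
    (Q⁻¹ * Q).trace = (d : ℝ) ∧
    ∀ Q' : Matrix (Fin d) (Fin d) ℝ, Q'.IsSymm → Q'.PosDef →
      Q.det ≤ Q'.det → (d : ℝ) ≤ (Q⁻¹ * Q').trace := by
  have hdet : IsUnit Q.det := hQpd.det_pos.ne'.isUnit
  constructor
  · rw [Matrix.nonsing_inv_mul Q hdet, Matrix.trace_one]
    simp
  · intro Q' hQ'symm hQ'pd hdetle
    rcases Nat.eq_zero_or_pos d with hd | hd
    · subst hd
      simp [Matrix.trace]
    have hinv : (Q⁻¹).PosDef := hQpd.inv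
    have hs : (Q⁻¹).PosSemidef := hinv.posSemidef
    set R := open scoped MatrixOrder in CFC.sqrt (Q⁻¹) with hRdef
    have hR : R.PosSemidef := open scoped MatrixOrder in (CFC.sqrt_nonneg (Q⁻¹)).posSemidef
    have hRR : R * R = Q⁻¹ := open scoped MatrixOrder in CFC.sqrt_mul_sqrt_self (Q⁻¹) hs.nonneg
    set N := R * Q' * R with hNdef
    have hN : N.PosSemidef := by
      have := hQ'pd.posSemidef.mul_mul_conjTranspose_same R
      rwa [hR.1.eq] at this
    -- trace N = trace (Q⁻¹ * Q')
    have htr : N.trace = (Q⁻¹ * Q').trace := by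
      rw [hNdef, Matrix.trace_mul_cycle, hRR]
    -- det N ≥ 1
    have hdetN : (1 : ℝ) ≤ N.det := by
      have h1 : N.det = (Q.det)⁻¹ * Q'.det := by
        rw [hNdef, Matrix.det_mul, Matrix.det_mul, mul_right_comm, ← Matrix.det_mul, hRR,
          Matrix.det_nonsing_inv, Ring.inverse_eq_inv]
      rw [h1]
      calc (1:ℝ) = Q.det⁻¹ * Q.det := by
            rw [inv_mul_cancel₀ hQpd.det_pos.ne']
        _ ≤ Q.det⁻¹ * Q'.det :=
            mul_le_mul_of_nonneg_left hdetle (inv_nonneg.mpr hQpd.det_pos.le)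
    -- AM-GM on eigenvalues of N
    have hztr : ∑ i, hN.1.eigenvalues i = N.trace := (trace_eq_sum_eigenvalues hN.1).symm
    have hzdet : ∏ i, hN.1.eigenvalues i = N.det := by
      rw [hN.1.det_eq_prod_eigenvalues]; norm_num
    have hznn : ∀ i ∈ Finset.univ, (0:ℝ) ≤ hN.1.eigenvalues i :=
      fun i _ => hN.eigenvalues_nonneg i
    have hdne : (d:ℝ) ≠ 0 := Nat.cast_ne_zero.mpr hd.ne'
    have hamgm := Real.geom_mean_le_arith_mean_weighted Finset.univ
      (fun _ => (d:ℝ)⁻¹) (fun i => hN.1.eigenvalues i)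
      (fun i _ => by positivity) (by simp [Finset.card_univ, mul_comm]; field_simp)
      hznn
    have hge1 : (1:ℝ) ≤ ∏ i, (hN.1.eigenvalues i) ^ ((d:ℝ)⁻¹) := by
      rw [Real.finset_prod_rpow Finset.univ _ hznn, hzdet]
      calc (1:ℝ) = (1:ℝ) ^ ((d:ℝ)⁻¹) := (Real.one_rpow _).symm
        _ ≤ N.det ^ ((d:ℝ)⁻¹) :=
            Real.rpow_le_rpow one_pos.le hdetN (by positivity)
    have hsum : ∑ i, (d:ℝ)⁻¹ * hN.1.eigenvalues i = (d:ℝ)⁻¹ * N.trace := by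
      rw [← Finset.mul_sum, hztr]
    rw [hsum] at hamgm
    have : (1:ℝ) ≤ (d:ℝ)⁻¹ * N.trace := le_trans hge1 hamgm
    rw [← htr]
    calc (d:ℝ) = (d:ℝ) * 1 := (mul_one _).symm
      _ ≤ (d:ℝ) * ((d:ℝ)⁻¹ * N.trace) :=
          mul_le_mul_of_nonneg_left this (Nat.cast_nonneg d)
      _ = N.trace := by field_simp
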